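/- arXiv:2506.06338 — 2 statements merged into one kernel-verified Lean document; each statement's English description precedes it below -/
import Mathlib

section
/- Let a₁₁,a₁₂,a₂₁,a₂₂ > 0 with a₁₁a₂₂ ≠ a₁₂a₂₁, and let R₁,R₂,C₁,C₂ > 0 with R₁+R₂ = C₁+C₂. Set α = a₁₁a₂₂, β = a₁₂a₂₁, det = α−β, and Δ = (α(C₂+R₂)+β(C₁−R₂))² − 4αC₂R₂·det. Then the discriminant Δ is nonnegative. -/
theorem discriminant_nonneg (a11 a12 a21 a22 R1 R2 C1 C2 : ℝ)
    (ha11 : 0 < a11) (ha12 : 0 < a12) (ha21 : 0 < a21) (ha22 : 0 < a22)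
    (hR1 : 0 < R1) (hR2 : 0 < R2) (hC1 : 0 < C1) (hC2 : 0 < C2)
    (hns : a11 * a22 ≠ a12 * a21) (hcons : R1 + R2 = C1 + C2) :
    0 ≤ (a11 * a22 * (C2 + R2) + a12 * a21 * (C1 - R2)) ^ 2
        - 4 * (a11 * a22) * C2 * R2 * (a11 * a22 - a12 * a21) := by
  rcases le_or_gt (a11 * a22) (a12 * a21) with h | h
  · nlinarith [sq_nonneg (a11 * a22 * (C2 + R2) + a12 * a21 * (C1 - R2)),
      mul_pos (mul_pos (mul_pos ha11 ha22) hC2) hR2]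
  · nlinarith [sq_nonneg (a11 * a22 * C2 + a12 * a21 * C1 - (a11 * a22 - a12 * a21) * R2),
      mul_pos (mul_pos (mul_pos ha12 ha21) (sub_pos.mpr h)) (mul_pos hR2 hC1)]
end

section
/- Let α > 0, β > 0 with α ≠ β, and R₂, C₁, C₂ > 0 with C₁ + C₂ > R₂. Then Δ = (α(C₂+R₂)+β(C₁−R₂))² − 4αC₂R₂(α−β) > 0 and the value r₂ = (α(C₂+R₂)+β(C₁−R₂) − √Δ)/(2a₂₂(α−β)) is strictly positive for any a₂₂ > 0, and satisfies a₂₂·r₂ < R₂. -/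
set_option maxHeartbeats 1000000 in
theorem r2_positive_and_bounded (a22 α β R2 C1 C2 : ℝ)
    (ha22 : 0 < a22) (hα : 0 < α) (hβ : 0 < β) (hne : α ≠ β)
    (hR2 : 0 < R2) (hC1 : 0 < C1) (hC2 : 0 < C2) (hpos : R2 < C1 + C2) :
    let Δ : ℝ := (α * (C2 + R2) + β * (C1 - R2)) ^ 2 - 4 * α * C2 * R2 * (α - β)
    let r2 : ℝ := (α * (C2 + R2) + β * (C1 - R2) - Real.sqrt Δ) / (2 * a22 * (α - β))
    0 < Δ ∧ 0 < r2 ∧ a22 * r2 < R2 := by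
  intro Δ r2
  have hΔdef : Δ = (α * (C2 + R2) + β * (C1 - R2)) ^ 2 - 4 * α * C2 * R2 * (α - β) := rfl
  set B : ℝ := α * (C2 + R2) + β * (C1 - R2) with hBdef
  have hΔeq1 : Δ = (2 * (α - β) * R2 - B) ^ 2 + 4 * (α - β) * β * C1 * R2 := by
    rw [hΔdef, hBdef]; ring
  have hΔeq2 : Δ = B ^ 2 + 4 * α * C2 * R2 * (β - α) := by
    rw [hΔdef]; ring
  have hΔ : 0 < Δ := by
    rcases lt_or_gt_of_ne hne with h | h
    · have hp : 0 < 4 * α * C2 * R2 * (β - α) :=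
        mul_pos (by positivity) (by linarith)
      nlinarith [sq_nonneg B]
    · have hp : 0 < 4 * (α - β) * β * C1 * R2 := by
        have h1 : 0 < 4 * (α - β) := by linarith
        have : 0 < β * C1 * R2 := by positivity
        nlinarith
      nlinarith [sq_nonneg (2 * (α - β) * R2 - B)]
  have hs : Real.sqrt Δ ^ 2 = Δ := Real.sq_sqrt hΔ.le
  have hspos : 0 < Real.sqrt Δ := Real.sqrt_pos.mpr hΔ
  set s : ℝ := Real.sqrt Δ with hsdef
  have hr2def : r2 = (B - s) / (2 * a22 * (α - β)) := rfl
  clear_value Δ r2 B s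
  refine ⟨hΔ, ?_, ?_⟩
  · rw [hr2def]
    rcases lt_or_gt_of_ne hne with h | h
    · -- α < β : numerator and denominator both negative
      have hp : 0 < 4 * α * C2 * R2 * (β - α) :=
        mul_pos (by positivity) (by linarith)
      have hBs : B < s := by nlinarith
      exact div_pos_of_neg_of_neg (by linarith) (by nlinarith)
    · -- β < α
      have hBpos : 0 < B := by rw [hBdef]; nlinarith
      have hp : 0 < 4 * α * C2 * R2 * (α - β) :=
        mul_pos (by positivity) (by linarith)
      have hBs : s < B := by nlinarith
      exact div_pos (by linarith) (by nlinarith)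
  · rw [hr2def]
    have hab : α - β ≠ 0 := sub_ne_zero.mpr hne
    have key : a22 * ((B - s) / (2 * a22 * (α - β))) = (B - s) / (2 * (α - β)) := by
      field_simp
    rw [key]
    rcases lt_or_gt_of_ne hne with h | h
    · have hp : 0 < 4 * (β - α) * β * C1 * R2 := by
        have h1 : 0 < 4 * (β - α) := by linarith
        have : 0 < β * C1 * R2 := by positivity
        nlinarith
      have htpos : 0 < B - 2 * (α - β) * R2 := by rw [hBdef]; nlinarith
      have hts : s < B - 2 * (α - β) * R2 := by nlinarith
      rw [div_lt_iff_of_neg (by linarith : 2 * (α - β) < 0)]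
      linarith
    · have hp : 0 < 4 * (α - β) * β * C1 * R2 := by
        have h1 : 0 < 4 * (α - β) := by linarith
        have : 0 < β * C1 * R2 := by positivity
        nlinarith
      have hts : B - 2 * (α - β) * R2 < s := by
        nlinarith [sq_nonneg (B - 2 * (α - β) * R2 - s)]
      rw [div_lt_iff₀ (by linarith : (0:ℝ) < 2 * (α - β))]
      linarith
end
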